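/- For the van der Corput sequence (φ(n))_{n≥0}, if j ≥ ⌈log₂ N⌉ then the Haar coefficient of the local discrepancy of the first N terms satisfies |μ^{N,φ}_{j,m}| = 2^{−2j−2} for every m ∈ {0,...,2^j−1}. -/

import Mathlib

open MeasureTheory Finset

/-- Base-2 radical inverse: for `n = ∑ nᵢ 2ⁱ`, `radInv n = ∑ nᵢ 2^{-i-1}`. -/
noncomputable def radInv (n : ℕ) : ℝ :=
  ∑ i ∈ Finset.range n, if n.testBit i then (1:ℝ)/2^(i+1) else 0

/-- L∞-normalized Haar function supported on `I_{j,m} = [m/2^j, (m+1)/2^j)`. -/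
noncomputable def haarFn (j m : ℕ) (t : ℝ) : ℝ :=
  if (m:ℝ)/2^j ≤ t ∧ t < (m:ℝ)/2^j + 1/2^(j+1) then 1
  else if (m:ℝ)/2^j + 1/2^(j+1) ≤ t ∧ t < ((m:ℝ)+1)/2^j then -1
  else 0

/-- Local discrepancy of the first `N` terms of the sequence `x`. -/
noncomputable def disc (x : ℕ → ℝ) (N : ℕ) (t : ℝ) : ℝ :=
  (∑ n ∈ Finset.range N, Set.indicator (Set.Ico (0:ℝ) t) (fun _ => (1:ℝ)) (x n)) / N - t

/-- Symmetrized van der Corput sequence: `z_{2m} = φ(m)`, `z_{2m+1} = 1 - φ(m)`. -/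
noncomputable def vdcSym (n : ℕ) : ℝ :=
  if n % 2 = 0 then radInv (n / 2) else 1 - radInv (n / 2)

/-- Haar coefficient `μ_{j,m}` of the local discrepancy of the first `N` terms of `x`. -/
noncomputable def haarCoeff (x : ℕ → ℝ) (N j m : ℕ) : ℝ :=
  ∫ t in (0:ℝ)..1, disc x N t * haarFn j m t

/-! ### Auxiliary lemmas -/

lemma radInv_nonneg (n : ℕ) : 0 ≤ radInv n := by
  apply Finset.sum_nonneg
  intro i _
  split <;> positivity

lemma radInv_eq_sum (n j : ℕ) (h : n < 2^j) :
    radInv n = ∑ i ∈ Finset.range j, if n.testBit i then (1:ℝ)/2^(i+1) else 0 := by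
  unfold radInv
  have h1 : (∑ i ∈ Finset.range n, if n.testBit i then (1:ℝ)/2^(i+1) else 0)
      = ∑ i ∈ Finset.range (max n j), if n.testBit i then (1:ℝ)/2^(i+1) else 0 := by
    apply Finset.sum_subset (Finset.range_subset_range.2 (le_max_left n j))
    intro i _ hin
    simp only [Finset.mem_range, not_lt] at hin
    rw [Nat.testBit_eq_false_of_lt ((Nat.lt_two_pow_self (n := n)).trans_le (Nat.pow_le_pow_right (by norm_num) hin))]
    simp
  have h2 : (∑ i ∈ Finset.range j, if n.testBit i then (1:ℝ)/2^(i+1) else 0)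
      = ∑ i ∈ Finset.range (max n j), if n.testBit i then (1:ℝ)/2^(i+1) else 0 := by
    apply Finset.sum_subset (Finset.range_subset_range.2 (le_max_right n j))
    intro i _ hin
    simp only [Finset.mem_range, not_lt] at hin
    rw [Nat.testBit_eq_false_of_lt (h.trans_le (Nat.pow_le_pow_right (by norm_num) hin))]
    simp
  rw [h1, h2]

lemma radInv_dyadic (n j : ℕ) (h : n < 2^j) :
    ∃ k : ℕ, radInv n = (k : ℝ) / 2^j := by
  refine ⟨∑ i ∈ Finset.range j, if n.testBit i then 2^(j-1-i) else 0, ?_⟩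
  rw [radInv_eq_sum n j h]
  push_cast
  rw [Finset.sum_div]
  apply Finset.sum_congr rfl
  intro i hi
  simp only [Finset.mem_range] at hi
  split
  · rw [div_eq_div_iff (by positivity) (by positivity), one_mul, ← pow_add]
    congr 1
    omega
  · simp

lemma ind_eq (r t : ℝ) :
    Set.indicator (Set.Ico (0:ℝ) t) (fun _ => (1:ℝ)) r = if 0 ≤ r ∧ r < t then 1 else 0 := by
  simp [Set.indicator, Set.mem_Ico]

lemma meas_ind (r : ℝ) :
    Measurable (fun t => Set.indicator (Set.Ico (0:ℝ) t) (fun _ => (1:ℝ)) r) := by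
  simp only [ind_eq]
  by_cases h : 0 ≤ r
  · have : (fun t => if 0 ≤ r ∧ r < t then (1:ℝ) else 0) = fun t => if r < t then 1 else 0 := by
      funext t; simp [h]
    rw [this]
    exact Measurable.ite (show MeasurableSet (Set.Ioi r) from measurableSet_Ioi)
      measurable_const measurable_const
  · have : (fun t => if 0 ≤ r ∧ r < t then (1:ℝ) else 0) = fun _ => 0 := by
      funext t; simp [h]
    rw [this]; exact measurable_const

lemma meas_disc (x : ℕ → ℝ) (N : ℕ) : Measurable (disc x N) := by
  unfold disc
  exact ((Finset.measurable_sum _ (fun n _ => meas_ind (x n))).div_const _).sub measurable_id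

lemma meas_haar (j m : ℕ) : Measurable (haarFn j m) := by
  unfold haarFn
  exact Measurable.ite (show MeasurableSet (Set.Ico ((m:ℝ)/2^j) ((m:ℝ)/2^j + 1/2^(j+1))) from
      measurableSet_Ico) measurable_const
    (Measurable.ite (show MeasurableSet (Set.Ico ((m:ℝ)/2^j + 1/2^(j+1)) (((m:ℝ)+1)/2^j)) from
      measurableSet_Ico) measurable_const measurable_const)

lemma abs_haar_le (j m : ℕ) (t : ℝ) : |haarFn j m t| ≤ 1 := by
  unfold haarFn
  split
  · simp
  · split <;> simp

lemma abs_disc_le (x : ℕ → ℝ) (N : ℕ) (t : ℝ) : |disc x N t| ≤ 1 + |t| := by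
  unfold disc
  have h1 : 0 ≤ ∑ n ∈ Finset.range N, Set.indicator (Set.Ico (0:ℝ) t) (fun _ => (1:ℝ)) (x n) := by
    apply Finset.sum_nonneg; intro n _; rw [ind_eq]; split <;> norm_num
  have h2 : (∑ n ∈ Finset.range N, Set.indicator (Set.Ico (0:ℝ) t) (fun _ => (1:ℝ)) (x n)) ≤ N := by
    calc _ ≤ ∑ n ∈ Finset.range N, (1:ℝ) := by
            apply Finset.sum_le_sum; intro n _; rw [ind_eq]; split <;> norm_num
      _ = N := by simp
  have h3 : (∑ n ∈ Finset.range N, Set.indicator (Set.Ico (0:ℝ) t) (fun _ => (1:ℝ)) (x n)) / N ≤ 1 := by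
    rcases Nat.eq_zero_or_pos N with h | h
    · subst h; simp
    · rw [div_le_one (by exact_mod_cast h)]; exact h2
  have h4 : 0 ≤ (∑ n ∈ Finset.range N, Set.indicator (Set.Ico (0:ℝ) t) (fun _ => (1:ℝ)) (x n)) / N :=
    div_nonneg h1 (Nat.cast_nonneg N)
  calc |_ / _ - t| ≤ |_ / _| + |t| := abs_sub _ _
    _ ≤ 1 + |t| := by rw [abs_of_nonneg h4]; linarith

lemma intInt (x : ℕ → ℝ) (N j m : ℕ) (p q : ℝ) :
    IntervalIntegrable (fun t => disc x N t * haarFn j m t) volume p q := by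
  have hg : IntervalIntegrable (fun t : ℝ => 1 + |t|) volume p q :=
    (continuous_const.add continuous_abs).intervalIntegrable _ _
  apply hg.mono_fun'
  · exact ((meas_disc x N).mul (meas_haar j m)).aestronglyMeasurable
  · apply Filter.Eventually.of_forall
    intro t
    calc ‖disc x N t * haarFn j m t‖ = |disc x N t| * |haarFn j m t| := abs_mul _ _
      _ ≤ (1 + |t|) * 1 := by
          apply mul_le_mul (abs_disc_le x N t) (abs_haar_le j m t) (abs_nonneg _) (by positivity)
      _ = 1 + |t| := mul_one _

lemma dy (j m : ℕ) : ((m:ℝ)+1)/2^j = (m:ℝ)/2^j + 1/2^(j+1) + 1/2^(j+1) := by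
  rw [pow_succ]
  field_simp
  ring

lemma haar_eq_one (j m : ℕ) (t : ℝ) (h1 : (m:ℝ)/2^j ≤ t) (h2 : t < (m:ℝ)/2^j + 1/2^(j+1)) :
    haarFn j m t = 1 := by
  unfold haarFn; rw [if_pos ⟨h1, h2⟩]

lemma haar_eq_neg_one (j m : ℕ) (t : ℝ) (h1 : (m:ℝ)/2^j + 1/2^(j+1) ≤ t)
    (h2 : t < ((m:ℝ)+1)/2^j) : haarFn j m t = -1 := by
  have hp : (0:ℝ) < 1/2^(j+1) := by positivity
  unfold haarFn
  rw [if_neg (by push_neg; intro _; linarith), if_pos ⟨h1, h2⟩]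

lemma haar_eq_zero_left (j m : ℕ) (t : ℝ) (h : t < (m:ℝ)/2^j) : haarFn j m t = 0 := by
  have hp : (0:ℝ) < 1/2^(j+1) := by positivity
  unfold haarFn
  rw [if_neg (by push_neg; intro h1; linarith), if_neg (by push_neg; intro h1; linarith)]

lemma haar_eq_zero_right (j m : ℕ) (t : ℝ) (h : ((m:ℝ)+1)/2^j ≤ t) : haarFn j m t = 0 := by
  have hd := dy j m
  have hp : (0:ℝ) < 1/2^(j+1) := by positivity
  unfold haarFn
  rw [if_neg (by push_neg; intro h1; linarith), if_neg (by push_neg; intro h1; linarith)]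

theorem haarCoeff_vdc_large_j (N j m : ℕ) (hN : 0 < N)
    (hj : Nat.clog 2 N ≤ j) (hm : m < 2^j) :
    |haarCoeff (fun n => radInv n) N j m| = 1/2^(2*j+2) := by
  have hNle : N ≤ 2^j := (Nat.clog_le_iff_le_pow (by norm_num)).1 hj
  have hd := dy j m
  have hhpos : (0:ℝ) < 1/2^(j+1) := by positivity
  have hp01 : (0:ℝ) ≤ (m:ℝ)/2^j := by positivity
  have hp12 : (m:ℝ)/2^j < (m:ℝ)/2^j + 1/2^(j+1) := by linarith
  have hp23 : (m:ℝ)/2^j + 1/2^(j+1) < ((m:ℝ)+1)/2^j := by rw [hd]; linarith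
  have hp31 : ((m:ℝ)+1)/2^j ≤ 1 := by
    rw [div_le_one (by positivity)]
    exact_mod_cast Nat.succ_le_of_lt hm
  set E : ℝ := ∑ n ∈ Finset.range N, (if radInv n ≤ (m:ℝ)/2^j then (1:ℝ) else 0) with hE
  -- key constancy of the counting part
  have key : ∀ t : ℝ, (m:ℝ)/2^j < t → t < ((m:ℝ)+1)/2^j →
      disc (fun n => radInv n) N t = E/N - t := by
    intro t h1 h2
    unfold disc
    rw [hE]
    congr 2
    apply Finset.sum_congr rfl
    intro n hn
    rw [ind_eq]
    obtain ⟨k, hk⟩ := radInv_dyadic n j (lt_of_lt_of_le (Finset.mem_range.1 hn) hNle)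
    by_cases hkm : k ≤ m
    · have hle : radInv n ≤ (m:ℝ)/2^j := by
        have hk1 : (k:ℝ) ≤ (m:ℝ) := by exact_mod_cast hkm
        rw [hk]; gcongr
      rw [if_pos ⟨radInv_nonneg n, lt_of_le_of_lt hle h1⟩, if_pos hle]
    · push_neg at hkm
      have hge : ((m:ℝ)+1)/2^j ≤ radInv n := by
        have hk1 : ((m:ℝ)+1) ≤ (k:ℝ) := by exact_mod_cast Nat.succ_le_of_lt hkm
        rw [hk]; gcongr
      have hma : (m:ℝ)/2^j < ((m:ℝ)+1)/2^j := by linarith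
      have hL : ¬(0 ≤ radInv n ∧ radInv n < t) := by push_neg; intro _; linarith
      have hR : ¬(radInv n ≤ (m:ℝ)/2^j) := by push_neg; linarith
      rw [if_neg hL, if_neg hR]
  have hii := intInt (fun n => radInv n) N j m
  have e1 := intervalIntegral.integral_add_adjacent_intervals
    (hii 0 ((m:ℝ)/2^j)) (hii ((m:ℝ)/2^j) ((m:ℝ)/2^j + 1/2^(j+1)))
  have e2 := intervalIntegral.integral_add_adjacent_intervals
    (hii 0 ((m:ℝ)/2^j + 1/2^(j+1))) (hii ((m:ℝ)/2^j + 1/2^(j+1)) (((m:ℝ)+1)/2^j))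
  have e3 := intervalIntegral.integral_add_adjacent_intervals
    (hii 0 (((m:ℝ)+1)/2^j)) (hii (((m:ℝ)+1)/2^j) 1)
  -- piece A
  have pA : (∫ t in (0:ℝ)..((m:ℝ)/2^j),
      disc (fun n => radInv n) N t * haarFn j m t) = 0 := by
    rw [intervalIntegral.integral_of_le hp01, MeasureTheory.integral_Ioc_eq_integral_Ioo,
      MeasureTheory.setIntegral_congr_fun (g := fun _ => (0:ℝ)) measurableSet_Ioo ?_]
    · simp
    · intro t ht
      show disc (fun n => radInv n) N t * haarFn j m t = 0
      rw [haar_eq_zero_left j m t ht.2, mul_zero]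
  -- piece D
  have pD : (∫ t in (((m:ℝ)+1)/2^j)..1,
      disc (fun n => radInv n) N t * haarFn j m t) = 0 := by
    rw [intervalIntegral.integral_of_le hp31, MeasureTheory.integral_Ioc_eq_integral_Ioo,
      MeasureTheory.setIntegral_congr_fun (g := fun _ => (0:ℝ)) measurableSet_Ioo ?_]
    · simp
    · intro t ht
      show disc (fun n => radInv n) N t * haarFn j m t = 0
      rw [haar_eq_zero_right j m t ht.1.le, mul_zero]
  -- piece B
  have pB : (∫ t in ((m:ℝ)/2^j)..((m:ℝ)/2^j + 1/2^(j+1)),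
      disc (fun n => radInv n) N t * haarFn j m t)
      = ((m:ℝ)/2^j + 1/2^(j+1) - (m:ℝ)/2^j) * (E/N)
        - (((m:ℝ)/2^j + 1/2^(j+1))^2/2 - ((m:ℝ)/2^j)^2/2) := by
    rw [intervalIntegral.integral_of_le hp12.le, MeasureTheory.integral_Ioc_eq_integral_Ioo,
      MeasureTheory.setIntegral_congr_fun (g := fun t => E/N - t) measurableSet_Ioo ?_]
    · rw [← MeasureTheory.integral_Ioc_eq_integral_Ioo,
        ← intervalIntegral.integral_of_le hp12.le,
        intervalIntegral.integral_sub intervalIntegrable_const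
          intervalIntegral.intervalIntegrable_id,
        intervalIntegral.integral_const, integral_id]
      simp [smul_eq_mul]
      ring
    · intro t ht
      show disc (fun n => radInv n) N t * haarFn j m t = E/N - t
      rw [haar_eq_one j m t ht.1.le ht.2, mul_one, key t ht.1 (ht.2.trans hp23)]
  -- piece C
  have pC : (∫ t in ((m:ℝ)/2^j + 1/2^(j+1))..(((m:ℝ)+1)/2^j),
      disc (fun n => radInv n) N t * haarFn j m t)
      = -((((m:ℝ)+1)/2^j - ((m:ℝ)/2^j + 1/2^(j+1))) * (E/N)
        - ((((m:ℝ)+1)/2^j)^2/2 - ((m:ℝ)/2^j + 1/2^(j+1))^2/2)) := by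
    rw [intervalIntegral.integral_of_le hp23.le, MeasureTheory.integral_Ioc_eq_integral_Ioo,
      MeasureTheory.setIntegral_congr_fun (g := fun t => -(E/N - t)) measurableSet_Ioo ?_]
    · rw [← MeasureTheory.integral_Ioc_eq_integral_Ioo,
        ← intervalIntegral.integral_of_le hp23.le, intervalIntegral.integral_neg,
        intervalIntegral.integral_sub intervalIntegrable_const
          intervalIntegral.intervalIntegrable_id,
        intervalIntegral.integral_const, integral_id]
      simp [smul_eq_mul]
      ring
    · intro t ht
      show disc (fun n => radInv n) N t * haarFn j m t = -(E/N - t)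
      rw [haar_eq_neg_one j m t ht.1.le ht.2, key t (hp12.trans ht.1) ht.2]
      ring
  -- final arithmetic
  have hrhs : ((1:ℝ)/2^(j+1))^2 = 1/2^(2*j+2) := by
    rw [div_pow, one_pow, ← pow_mul, show (j+1)*2 = 2*j+2 from by omega]
  have hval : haarCoeff (fun n => radInv n) N j m = 1/2^(2*j+2) := by
    have hsum : haarCoeff (fun n => radInv n) N j m
        = (((m:ℝ)/2^j + 1/2^(j+1) - (m:ℝ)/2^j) * (E/N)
            - (((m:ℝ)/2^j + 1/2^(j+1))^2/2 - ((m:ℝ)/2^j)^2/2))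
          + (-((((m:ℝ)+1)/2^j - ((m:ℝ)/2^j + 1/2^(j+1))) * (E/N)
            - ((((m:ℝ)+1)/2^j)^2/2 - ((m:ℝ)/2^j + 1/2^(j+1))^2/2))) := by
      unfold haarCoeff
      rw [← pB, ← pC]
      linarith [e1, e2, e3, pA, pD]
    rw [hsum, ← hrhs, hd]
    ring
  rw [hval]
  rw [abs_of_nonneg (by positivity)]
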